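/- arXiv:2511.20533 — 2 statements merged into one kernel-verified Lean document; each statement's English description precedes it below -/
import Mathlib

section
/- Let K be a field of characteristic different from 2 and 3, and let E: y² = x³ + A·x + B be an elliptic curve over K with nonzero discriminant Δ = -16(4A³ + 27B²). Suppose α ∈ K satisfies α³ + A·α + B = 0, so P = (α, 0) is a 2-torsion point of E. Set c = 3α² + A, A' = A - 5c, B' = B - 7c·α. Then the codomain curve E': y² = x³ + A'·x + B' also has nonzero discriminant, i.e., 4A'³ + 27B'² ≠ 0. -/
theorem velu_codomain_discriminant_ne_zero
    {K : Type*} [Field K] (h2 : (2 : K) ≠ 0) (h3 : (3 : K) ≠ 0)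
    (A B α : K) (hΔ : 4 * A ^ 3 + 27 * B ^ 2 ≠ 0)
    (hα : α ^ 3 + A * α + B = 0) :
    4 * (A - 5 * (3 * α ^ 2 + A)) ^ 3 +
      27 * (B - 7 * (3 * α ^ 2 + A) * α) ^ 2 ≠ 0 := by
  have hB : B = -(α ^ 3 + A * α) := by linear_combination hα
  subst hB
  have key : 4 * A ^ 3 + 27 * (-(α ^ 3 + A * α)) ^ 2
      = (3 * α ^ 2 + A) ^ 2 * (3 * α ^ 2 + 4 * A) := by ring
  rw [key] at hΔ
  have hc : (3 * α ^ 2 + A) ≠ 0 := by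
    intro h; apply hΔ; rw [h]; ring
  have hd : (3 * α ^ 2 + 4 * A) ≠ 0 := by
    intro h; apply hΔ; rw [h]; ring
  have h16 : (-16 : K) ≠ 0 := by
    have : (16 : K) = 2 ^ 4 := by norm_num
    simp only [neg_ne_zero, this]
    exact pow_ne_zero 4 h2
  have eq2 : 4 * (A - 5 * (3 * α ^ 2 + A)) ^ 3 +
      27 * (-(α ^ 3 + A * α) - 7 * (3 * α ^ 2 + A) * α) ^ 2
      = -16 * ((3 * α ^ 2 + 4 * A) ^ 2 * (3 * α ^ 2 + A)) := by ring
  rw [eq2]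
  exact mul_ne_zero h16 (mul_ne_zero (pow_ne_zero 2 hd) hc)
end

section
/- Let K be a field of characteristic ≠ 2, 3 and E: y² = x³ + A·x + B an elliptic curve over K with α ∈ K a root of x³ + A·x + B. Define c = 3α² + A, A' = A - 5c, B' = B - 7cα, and for (x, y) on E with x ≠ α set φ(x,y) = (x + c/(x-α), y·(1 - c/(x-α)²)). Then φ(x,y) lies on the curve E': y² = x³ + A'·x + B'; that is, the identity (y(1 - c/(x-α)²))² = (x + c/(x-α))³ + A'(x + c/(x-α)) + B' holds whenever y² = x³ + Ax + B and α³ + Aα + B = 0. -/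
theorem velu_two_isogeny_maps_to_codomain
    {K : Type*} [Field K] (h2 : (2 : K) ≠ 0) (h3 : (3 : K) ≠ 0)
    (A B α x y : K) (hα : α ^ 3 + A * α + B = 0)
    (hxy : y ^ 2 = x ^ 3 + A * x + B) (hx : x ≠ α) :
    (y * (1 - (3 * α ^ 2 + A) / (x - α) ^ 2)) ^ 2 =
      (x + (3 * α ^ 2 + A) / (x - α)) ^ 3 +
        (A - 5 * (3 * α ^ 2 + A)) * (x + (3 * α ^ 2 + A) / (x - α)) +
        (B - 7 * (3 * α ^ 2 + A) * α) := by
  have hd : x - α ≠ 0 := sub_ne_zero.mpr hx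
  have hB : B = -(α ^ 3 + A * α) := by linear_combination hα
  subst hB
  rw [mul_pow, hxy]
  field_simp
  ring
end
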